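/- Let A and B be finite sets, E a set of edges of the complete bipartite graph on A ⊔ B, and Q ⊆ E. Suppose P is a set of edges of the complete bipartite graph on A ⊔ B disjoint from E, of minimum cardinality among all such sets with the property that for every connected component D of (A, B, Q), all vertices of D lie in a single connected component of (A, B, (E − Q) ∪ P). Then the graph (A, B, P) is a forest (contains no cycle); consequently |P| ≤ |A| + |B| − 1. -/

import Mathlib

variable {R C : Type*}

/-- Direction-blind adjacency in the bipartite graph on `R ⊕ C` via an edge in `S`. -/
def Adj (S : Set (R × C)) (v w : R ⊕ C) : Prop :=
  ∃ e ∈ S, (v = Sum.inl e.1 ∧ w = Sum.inr e.2) ∨ (v = Sum.inr e.2 ∧ w = Sum.inl e.1)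

/-- Connectivity in the bipartite graph on `R ⊕ C` via edges in `S`. -/
def Conn (S : Set (R × C)) : (R ⊕ C) → (R ⊕ C) → Prop :=
  Relation.ReflTransGen (Adj S)

/-- `D` is a connected component of the bipartite graph with edge set `S`. -/
def IsCC (S : Set (R × C)) (D : Set (R ⊕ C)) : Prop :=
  ∃ v, D = {w | Conn S v w}

/-- All vertices of `D` are joined by paths using edges in `S`. -/
def ConnectedOn (S : Set (R × C)) (D : Set (R ⊕ C)) : Prop :=
  ∀ v ∈ D, ∀ w ∈ D, Conn S v w

/-- The bipartite graph with edge set `P` contains an edge-simple cycle. -/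
def HasCycle {A B : Type*} (P : Set (A × B)) : Prop :=
  ∃ (k : ℕ) (r : ℕ → A) (c : ℕ → B),
    0 < k ∧ r k = r 0 ∧
    (∀ t < k, (r t, c t) ∈ P ∧ (r (t + 1), c t) ∈ P) ∧
    (∀ s < k, ∀ t < k, s ≠ t → (r s, c s) ≠ (r t, c t)) ∧
    (∀ s < k, ∀ t < k, s ≠ t → (r (s + 1), c s) ≠ (r (t + 1), c t)) ∧
    (∀ s < k, ∀ t < k, (r s, c s) ≠ (r (t + 1), c t))

lemma adj_symm {R C : Type*} (S : Set (R × C)) : Symmetric (Adj S) := by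
  rintro v w ⟨e, he, h | h⟩
  · exact ⟨e, he, Or.inr ⟨h.2, h.1⟩⟩
  · exact ⟨e, he, Or.inl ⟨h.2, h.1⟩⟩

lemma conn_symm {R C : Type*} {S : Set (R × C)} {v w : R ⊕ C} (h : Conn S v w) : Conn S w v :=
  by haveI : Std.Symm (Adj S) := ⟨fun a b h => adj_symm S h⟩; exact Std.Symm.symm (r := Relation.ReflTransGen (Adj S)) _ _ h

lemma conn_mono {R C : Type*} {S T : Set (R × C)} (hST : S ⊆ T) {v w : R ⊕ C}
    (h : Conn S v w) : Conn T v w :=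
  Relation.ReflTransGen.mono (p := Adj T) (fun _ _ ⟨e, he, hc⟩ => ⟨e, hST he, hc⟩) v w h

lemma conn_lift {R C : Type*} {S T : Set (R × C)} (H : ∀ v w, Adj S v w → Conn T v w)
    {v w : R ⊕ C} (h : Conn S v w) : Conn T v w := by
  induction h with
  | refl => exact Relation.ReflTransGen.refl
  | tail _ hadj ih => exact ih.trans (H _ _ hadj)

/-- An odd walk of `m` "double steps": `a = r 0, c 0, r 1, c 1, …, r m, c m = b`. -/
def IsOW {A B : Type*} (P : Set (A × B)) (a : A) (b : B) (m : ℕ) (r : ℕ → A) (c : ℕ → B) : Prop :=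
  r 0 = a ∧ c m = b ∧ (∀ t, t ≤ m → (r t, c t) ∈ P) ∧ (∀ t, t < m → (r (t + 1), c t) ∈ P)

lemma reach {A B : Type*} [Nonempty B] (P : Set (A × B)) (a : A) {w : A ⊕ B}
    (h : Conn P (Sum.inl a) w) :
    ∃ (m : ℕ) (r : ℕ → A) (c : ℕ → B), r 0 = a ∧ (∀ t, t < m → (r t, c t) ∈ P ∧ (r (t + 1), c t) ∈ P) ∧
      (w = Sum.inl (r m) ∨ (w = Sum.inr (c m) ∧ (r m, c m) ∈ P)) := by
  induction h with
  | refl =>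
      exact ⟨0, fun _ => a, fun _ => Classical.arbitrary B, rfl,
        fun t ht => absurd ht (by omega), Or.inl rfl⟩
  | @tail mid nxt _ hadj ih =>
      obtain ⟨m, r, c, hr0, hsteps, hend⟩ := ih
      obtain ⟨e, he, hcase⟩ := hadj
      rcases hend with hw | ⟨hw, hrm⟩
      · rcases hcase with ⟨h1, h2⟩ | ⟨h1, h2⟩
        · -- mid = inl e.1 = inl (r m), next = inr e.2
          have he1 : e.1 = r m := by rw [hw] at h1; exact (Sum.inl.inj h1).symm
          refine ⟨m, r, Function.update c m e.2, hr0, ?_, Or.inr ⟨?_, ?_⟩⟩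
          · intro t ht
            rw [Function.update_of_ne (by omega)]
            exact hsteps t ht
          · rw [h2, Function.update_self]
          · rw [Function.update_self, ← he1]
            exact he
        · rw [hw] at h1; exact absurd h1 (by simp)
      · rcases hcase with ⟨h1, h2⟩ | ⟨h1, h2⟩
        · rw [hw] at h1; exact absurd h1 (by simp)
        · -- mid = inr e.2 = inr (c m), next = inl e.1
          have he2 : e.2 = c m := by rw [hw] at h1; exact (Sum.inr.inj h1).symm
          refine ⟨m + 1, Function.update r (m + 1) e.1, c, ?_, ?_, Or.inl ?_⟩
          · rw [Function.update_of_ne (by omega)]; exact hr0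
          · intro t ht
            constructor
            · rw [Function.update_of_ne (by omega)]
              rcases Nat.lt_or_ge t m with h' | h'
              · exact (hsteps t h').1
              · have : t = m := by omega
                subst this; exact hrm
            · rcases Nat.lt_or_ge t m with h' | h'
              · rw [Function.update_of_ne (by omega)]
                exact (hsteps t h').2
              · have : t = m := by omega
                subst this
                rw [Function.update_self, ← he2]
                exact he
          · rw [h2, Function.update_self]


lemma key {A B : Type*} {P : Set (A × B)} {a : A} {b : B} (hab : (a, b) ∈ P)
    (h : Conn (P \ {(a, b)}) (Sum.inl a) (Sum.inr b)) : HasCycle P := by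
  classical
  haveI : Nonempty B := ⟨b⟩
  set P' := P \ {(a, b)} with hP'
  have hex : ∃ m, ∃ r : ℕ → A, ∃ c : ℕ → B, IsOW P' a b m r c := by
    obtain ⟨m, r, c, hr0, hsteps, hend⟩ := reach P' a h
    rcases hend with hw | ⟨hw, hrm⟩
    · exact absurd hw (by simp)
    · refine ⟨m, r, c, hr0, (Sum.inr.inj hw).symm, ?_, fun t ht => (hsteps t ht).2⟩
      intro t ht
      rcases Nat.lt_or_ge t m with h' | h'
      · exact (hsteps t h').1
      · have : t = m := by omega
        subst this; exact hrm
  obtain ⟨m, ⟨r, c, hr0, hcm, hf, hbk⟩, hmin⟩ :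
      ∃ m, (∃ r : ℕ → A, ∃ c : ℕ → B, IsOW P' a b m r c) ∧
        ∀ m' < m, ¬ ∃ r : ℕ → A, ∃ c : ℕ → B, IsOW P' a b m' r c :=
    ⟨Nat.find hex, Nat.find_spec hex, fun m' h' => Nat.find_min hex h'⟩
  -- c is injective on [0, m]
  have hcinj' : ∀ s t, s < t → t ≤ m → c s ≠ c t := by
    intro s t hst ht hceq
    by_cases htm : t = m
    · -- truncate at s
      refine hmin s (by omega) ⟨r, c, hr0, ?_, fun t' ht' => hf t' (by omega),
        fun t' ht' => hbk t' (by omega)⟩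
      rw [hceq, htm, hcm]
    · -- shortcut: length m - (t - s)
      have htm' : t < m := by omega
      set d := t - s with hd
      refine hmin (m - d) (by omega)
        ⟨fun i => if i ≤ s then r i else r (i + d),
         fun i => if i ≤ s then c i else c (i + d), ?_, ?_, ?_, ?_⟩ <;> beta_reduce
      · simp [hr0]
      · rw [if_neg (by omega : ¬ (m - d ≤ s)), show m - d + d = m by omega, hcm]
      · intro i hi
        by_cases h1 : i ≤ s
        · rw [if_pos h1, if_pos h1]; exact hf i (by omega)
        · rw [if_neg h1, if_neg h1]; exact hf (i + d) (by omega)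
      · intro i hi
        by_cases h1 : i + 1 ≤ s
        · rw [if_pos h1, if_pos (by omega : i ≤ s)]; exact hbk i (by omega)
        · rw [if_neg h1]
          by_cases h2 : i ≤ s
          · have his : i = s := by omega
            rw [if_pos h2, his, hceq, show s + 1 + d = t + 1 by omega]
            exact hbk t htm'
          · rw [if_neg h2, show i + 1 + d = i + d + 1 by omega]
            exact hbk (i + d) (by omega)
  have hcinj : ∀ s t, s ≤ m → t ≤ m → c s = c t → s = t := by
    intro s t hs ht hceq
    rcases lt_trichotomy s t with h' | h' | h'
    · exact absurd hceq (hcinj' s t h' ht)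
    · exact h'
    · exact absurd hceq.symm (hcinj' t s h' hs)
  -- r is injective on [0, m]
  have hrinj' : ∀ s t, s < t → t ≤ m → r s ≠ r t := by
    intro s t hst ht hreq
    set d := t - s with hd
    refine hmin (m - d) (by omega)
      ⟨fun i => if i ≤ s then r i else r (i + d),
       fun i => if i < s then c i else c (i + d), ?_, ?_, ?_, ?_⟩ <;> beta_reduce
    · simp [hr0]
    · rw [if_neg (by omega : ¬ (m - d < s)), show m - d + d = m by omega, hcm]
    · intro i hi
      by_cases h1 : i < s
      · rw [if_pos (by omega : i ≤ s), if_pos h1]; exact hf i (by omega)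
      · by_cases h2 : i ≤ s
        · have his : i = s := by omega
          rw [if_pos h2, if_neg h1, his, hreq, show s + d = t by omega]
          exact hf t ht
        · rw [if_neg h2, if_neg h1]; exact hf (i + d) (by omega)
    · intro i hi
      by_cases h1 : i < s
      · rw [if_pos h1, if_pos (by omega : i + 1 ≤ s)]; exact hbk i (by omega)
      · rw [if_neg h1, if_neg (by omega : ¬ (i + 1 ≤ s)), show i + 1 + d = i + d + 1 by omega]
        exact hbk (i + d) (by omega)
  have hrinj : ∀ s t, s ≤ m → t ≤ m → r s = r t → s = t := by
    intro s t hs ht hreq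
    rcases lt_trichotomy s t with h' | h' | h'
    · exact absurd hreq (hrinj' s t h' ht)
    · exact h'
    · exact absurd hreq.symm (hrinj' t s h' hs)
  have hm1 : 1 ≤ m := by
    by_contra h0
    have hm0 : m = 0 := by omega
    subst hm0
    exact (hf 0 (by omega)).2 (by simp [hr0, hcm])
  have hPsub : P' ⊆ P := Set.diff_subset
  -- build the cycle
  refine ⟨m + 1, fun t => if t ≤ m then r t else a, c, by omega, ?_, ?_, ?_, ?_, ?_⟩ <;>
    beta_reduce
  · rw [if_neg (by omega), if_pos (by omega), hr0]
  · intro t ht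
    constructor
    · rw [if_pos (by omega : t ≤ m)]
      exact hPsub (hf t (by omega))
    · by_cases h1 : t + 1 ≤ m
      · rw [if_pos h1]
        exact hPsub (hbk t (by omega))
      · have h2 : t = m := by omega
        rw [if_neg h1, h2, hcm]
        exact hab
  · intro s hs t ht hst hEq
    rw [Prod.mk.injEq] at hEq
    exact hst (hcinj s t (by omega) (by omega) hEq.2)
  · intro s hs t ht hst hEq
    rw [Prod.mk.injEq] at hEq
    exact hst (hcinj s t (by omega) (by omega) hEq.2)
  · intro s hs t ht hEq
    rw [Prod.mk.injEq] at hEq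
    have hstEq : s = t := hcinj s t (by omega) (by omega) hEq.2
    subst hstEq
    have h1 := hEq.1
    by_cases h2 : s + 1 ≤ m
    · rw [if_pos (by omega : s ≤ m), if_pos h2] at h1
      have := hrinj s (s + 1) (by omega) (by omega) h1
      omega
    · have hsm : s = m := by omega
      rw [if_pos (by omega : s ≤ m), if_neg h2, ← hr0] at h1
      have := hrinj s 0 (by omega) (by omega) h1
      omega

lemma cycle_detour {A B : Type*} {P : Set (A × B)} {k : ℕ} {r : ℕ → A} {c : ℕ → B}
    (hk : 0 < k)
    (hrk : r k = r 0)
    (hedges : ∀ t < k, (r t, c t) ∈ P ∧ (r (t + 1), c t) ∈ P)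
    (hfwd : ∀ s < k, ∀ t < k, s ≠ t → (r s, c s) ≠ (r t, c t))
    (hfb : ∀ s < k, ∀ t < k, (r s, c s) ≠ (r (t + 1), c t)) :
    Conn (P \ {(r 0, c 0)}) (Sum.inl (r 0)) (Sum.inr (c 0)) := by
  have H : ∀ t, t < k → Conn (P \ {(r 0, c 0)}) (Sum.inr (c 0)) (Sum.inl (r (t + 1))) := by
    intro t
    induction t with
    | zero =>
        intro h0
        exact Relation.ReflTransGen.single
          ⟨(r 1, c 0), ⟨(hedges 0 h0).2, fun hEq => hfb 0 h0 0 h0 hEq.symm⟩,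
            Or.inr ⟨rfl, rfl⟩⟩
    | succ t ih =>
        intro h
        have ht : t < k := by omega
        have s1 : Adj (P \ {(r 0, c 0)}) (Sum.inl (r (t + 1))) (Sum.inr (c (t + 1))) :=
          ⟨(r (t + 1), c (t + 1)),
            ⟨(hedges (t + 1) h).1, hfwd (t + 1) h 0 hk (by omega)⟩, Or.inl ⟨rfl, rfl⟩⟩
        have s2 : Adj (P \ {(r 0, c 0)}) (Sum.inr (c (t + 1))) (Sum.inl (r (t + 1 + 1))) :=
          ⟨(r (t + 2), c (t + 1)),
            ⟨(hedges (t + 1) h).2, fun hEq => hfb 0 hk (t + 1) h hEq.symm⟩,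
            Or.inr ⟨rfl, rfl⟩⟩
        exact ((ih ht).tail s1).tail s2
  have h1 := H (k - 1) (by omega)
  rw [show k - 1 + 1 = k by omega, hrk] at h1
  exact conn_symm h1

def connSetoid {A B : Type*} (S : Set (A × B)) : Setoid (A ⊕ B) :=
  ⟨Conn S, ⟨fun _ => Relation.ReflTransGen.refl, conn_symm, Relation.ReflTransGen.trans⟩⟩

lemma hascycle_mono {A B : Type*} {P P' : Set (A × B)} (h : P' ⊆ P) (hc : HasCycle P') :
    HasCycle P := by
  obtain ⟨k, r, c, h1, h2, h3, h4, h5, h6⟩ := hc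
  exact ⟨k, r, c, h1, h2, fun t ht => ⟨h (h3 t ht).1, h (h3 t ht).2⟩, h4, h5, h6⟩

lemma forest_bound {A B : Type*} [Fintype A] [Fintype B] :
    ∀ n (P : Set (A × B)), P.ncard = n → ¬ HasCycle P →
      P.ncard + Nat.card (Quotient (connSetoid P)) ≤ Fintype.card A + Fintype.card B := by
  classical
  intro n
  induction n with
  | zero =>
      intro P hn _
      rw [hn]
      have hsurj : Function.Surjective (Quotient.mk (connSetoid P)) := Quotient.mk_surjective
      calc 0 + Nat.card (Quotient (connSetoid P)) = Nat.card (Quotient (connSetoid P)) := by omega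
        _ ≤ Nat.card (A ⊕ B) := Nat.card_le_card_of_surjective _ hsurj
        _ = Fintype.card A + Fintype.card B := by
            rw [Nat.card_eq_fintype_card, Fintype.card_sum]
  | succ n ih =>
      intro P hn hnc
      have hPfin : P.Finite := Set.toFinite P
      obtain ⟨⟨a, b⟩, habP⟩ : P.Nonempty := by
        rw [← Set.ncard_pos hPfin]; omega
      set P' := P \ {(a, b)} with hP'
      have hP'n : P'.ncard = n := by
        rw [hP', Set.ncard_diff_singleton_of_mem habP]; omega
      have hnc' : ¬ HasCycle P' := fun h => hnc (hascycle_mono Set.diff_subset h)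
      have hIH := ih P' hP'n hnc'
      -- the natural surjection between quotients
      have hmono : ∀ v w : A ⊕ B, Conn P' v w → Conn P v w :=
        fun v w => conn_mono Set.diff_subset
      set f : Quotient (connSetoid P') → Quotient (connSetoid P) :=
        Quotient.map' id (fun v w h => hmono v w h) with hfdef
      have hfsurj : Function.Surjective f := by
        intro x
        obtain ⟨v, rfl⟩ := Quotient.mk_surjective x
        exact ⟨Quotient.mk _ v, rfl⟩
      have hfni : ¬ Function.Injective f := by
        intro hinj
        have hxy : (Quotient.mk (connSetoid P') (Sum.inl a)) ≠
            (Quotient.mk (connSetoid P') (Sum.inr b)) := by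
          intro hEq
          have hconn : Conn P' (Sum.inl a) (Sum.inr b) := Quotient.eq''.mp hEq
          exact hnc (key habP hconn)
        apply hxy
        apply hinj
        show Quotient.mk (connSetoid P) (Sum.inl a) = Quotient.mk (connSetoid P) (Sum.inr b)
        exact Quotient.sound (Relation.ReflTransGen.single ⟨(a, b), habP, Or.inl ⟨rfl, rfl⟩⟩)
      haveI : Fintype (Quotient (connSetoid P)) := Fintype.ofFinite _
      haveI : Fintype (Quotient (connSetoid P')) := Fintype.ofFinite _
      have hlt : Fintype.card (Quotient (connSetoid P)) <
          Fintype.card (Quotient (connSetoid P')) :=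
        Fintype.card_lt_of_surjective_not_injective f hfsurj hfni
      rw [Nat.card_eq_fintype_card] at hIH ⊢
      omega

/-- A minimum-cardinality set `P` of new edges connecting the vertices of every
connected component of `(A, B, Q)` in `(A, B, (E - Q) ∪ P)` is a forest, so
`|P| ≤ |A| + |B| - 1`. -/
theorem stmt14 {A B : Type*} [Fintype A] [Fintype B]
    (E Q : Set (A × B)) (hQE : Q ⊆ E)
    (P : Set (A × B)) (hPE : ∀ e ∈ P, e ∉ E)
    (hPconn : ∀ D : Set (A ⊕ B), IsCC Q D → ConnectedOn ((E \ Q) ∪ P) D)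
    (hmin : ∀ P' : Set (A × B), (∀ e ∈ P', e ∉ E) →
      (∀ D : Set (A ⊕ B), IsCC Q D → ConnectedOn ((E \ Q) ∪ P') D) →
      P.ncard ≤ P'.ncard) :
    ¬ HasCycle P ∧ P.ncard ≤ Fintype.card A + Fintype.card B - 1 := by
  classical
  have hforest : ¬ HasCycle P := by
    rintro ⟨k, r, c, hk, hrk, hedges, hfwd, hbwd, hfb⟩
    have heP : (r 0, c 0) ∈ P := (hedges 0 hk).1
    set P'' := P \ {(r 0, c 0)} with hP''
    have hdet : Conn P'' (Sum.inl (r 0)) (Sum.inr (c 0)) :=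
      cycle_detour hk hrk hedges hfwd hfb
    have hsub : P'' ⊆ (E \ Q) ∪ P'' := Set.subset_union_right
    have hC : Conn ((E \ Q) ∪ P'') (Sum.inl (r 0)) (Sum.inr (c 0)) := conn_mono hsub hdet
    have hlift : ∀ v w : A ⊕ B, Conn ((E \ Q) ∪ P) v w → Conn ((E \ Q) ∪ P'') v w := by
      intro v w
      apply conn_lift
      rintro v' w' ⟨f, hf, hc⟩
      by_cases hfe : f = (r 0, c 0)
      · subst hfe
        rcases hc with ⟨hv, hw⟩ | ⟨hv, hw⟩
        · subst hv; subst hw; exact hC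
        · subst hv; subst hw; exact conn_symm hC
      · refine Relation.ReflTransGen.single ⟨f, ?_, hc⟩
        rcases hf with hf | hf
        · exact Or.inl hf
        · exact Or.inr ⟨hf, hfe⟩
    have h2 := hmin P'' (fun f hf => hPE f hf.1)
      (fun D hD v hv w hw => hlift v w (hPconn D hD v hv w hw))
    have h3 : P''.ncard < P.ncard :=
      Set.ncard_diff_singleton_lt_of_mem heP (Set.toFinite P)
    omega
  refine ⟨hforest, ?_⟩
  have hb := forest_bound P.ncard P rfl hforest
  by_cases hV : Fintype.card A + Fintype.card B = 0
  · haveI hA : IsEmpty A := Fintype.card_eq_zero_iff.mp (by omega)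
    have hPe : P = ∅ := Set.eq_empty_of_isEmpty P
    simp [hPe]
  · have hne : Nonempty (A ⊕ B) := Fintype.card_pos_iff.mp (by rw [Fintype.card_sum]; omega)
    haveI : Nonempty (Quotient (connSetoid P)) := ⟨Quotient.mk _ (Classical.arbitrary _)⟩
    have hQpos : 0 < Nat.card (Quotient (connSetoid P)) := Nat.card_pos
    omega
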